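/- Let (F : C ⥤ D, G : D ⥤ C) be an adjoint pair with unit η : 1_C ⟶ G∘F and counit ε : F∘G ⟶ 1_D, and let I : C ⥤ X be a functor. Then F is heavily I-separable if and only if there exists a natural transformation γ : I∘(G∘F) ⟶ I (with components γ_a : I(G(F(a))) → I(a)) such that for every object a of C: (i) γ_a ∘ I(η_a) = id_{I(a)}, and (ii) γ_a ∘ γ_{G(F(a))} = γ_a ∘ I(G(ε_{F(a)})). -/

import Mathlib

open CategoryTheory

/-- A functor `F : C ⥤ D` is *heavily `I`-separable* (heavy separability of the second kind)
if there is a natural transformation `P : Hom_D(F −, F −) ⟶ Hom_X(I −, I −)` of functors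
`Cᵒᵖ × C ⥤ Set` such that `P (F.map f) = I.map f` and `P` is compatible with composition. -/
def HeavilyISeparable {C : Type*} [Category C] {D : Type*} [Category D]
    {X : Type*} [Category X] (F : C ⥤ D) (I : C ⥤ X) : Prop :=
  ∃ P : ∀ a b : C, (F.obj a ⟶ F.obj b) → (I.obj a ⟶ I.obj b),
    (∀ (a' a b b' : C) (u : a' ⟶ a) (v : b ⟶ b') (h : F.obj a ⟶ F.obj b),
        P a' b' (F.map u ≫ h ≫ F.map v) = I.map u ≫ P a b h ≫ I.map v) ∧
    (∀ (a b : C) (f : a ⟶ b), P a b (F.map f) = I.map f) ∧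
    (∀ (a b c : C) (f : F.obj a ⟶ F.obj b) (g : F.obj b ⟶ F.obj c),
        P a c (f ≫ g) = P a b f ≫ P b c g)

/-- A functor `F : C ⥤ D` is *heavily separable* if it is heavily `𝟭 C`-separable. -/
def HeavilySeparable {C : Type*} [Category C] {D : Type*} [Category D] (F : C ⥤ D) : Prop :=
  HeavilyISeparable F (𝟭 C)

/-- Rafael-type theorem for the left adjoint: `F` is heavily `I`-separable iff there is
`γ : I∘G∘F ⟶ I` with `γ ∘ Iη = id` and `γ ∘ (γ GF) = γ ∘ (IGεF)`. -/
theorem heavilyISeparable_leftAdjoint_iff {C D X : Type*} [Category C] [Category D]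
    [Category X] (F : C ⥤ D) (G : D ⥤ C) (adj : F ⊣ G) (I : C ⥤ X) :
    HeavilyISeparable F I ↔
      ∃ γ : F ⋙ G ⋙ I ⟶ I,
        (∀ a : C, I.map (adj.unit.app a) ≫ γ.app a = 𝟙 (I.obj a)) ∧
        (∀ a : C, γ.app (G.obj (F.obj a)) ≫ γ.app a =
            I.map (G.map (adj.counit.app (F.obj a))) ≫ γ.app a) := by
  constructor
  · rintro ⟨P, hnat, hF, hcomp⟩
    have hL : ∀ {a' a b : C} (u : a' ⟶ a) (h : F.obj a ⟶ F.obj b),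
        P a' b (F.map u ≫ h) = I.map u ≫ P a b h := by
      intro a' a b u h
      have := hnat a' a b b u (𝟙 b) h
      simpa using this
    have hR : ∀ {a b b' : C} (h : F.obj a ⟶ F.obj b) (v : b ⟶ b'),
        P a b' (h ≫ F.map v) = P a b h ≫ I.map v := by
      intro a b b' h v
      have := hnat a a b b' (𝟙 a) v h
      simpa using this
    refine ⟨{ app := fun a => P (G.obj (F.obj a)) a (adj.counit.app (F.obj a)),
              naturality := ?_ }, ?_, ?_⟩
    · intro a b f
      dsimp only [Functor.comp_obj, Functor.comp_map]
      rw [← hL (G.map (F.map f)) (adj.counit.app (F.obj b)),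
        ← hR (adj.counit.app (F.obj a)) f]
      congr 1
      exact adj.counit.naturality (F.map f)
    · intro a
      dsimp only
      have e : P a a (F.map (adj.unit.app a) ≫ adj.counit.app (F.obj a)) =
          I.map (adj.unit.app a) ≫ P (G.obj (F.obj a)) a (adj.counit.app (F.obj a)) := hL _ _
      rw [← e]
      have e2 : F.map (adj.unit.app a) ≫ adj.counit.app (F.obj a) = F.map (𝟙 a) := by
        simp
      rw [e2, hF, I.map_id]
    · intro a
      dsimp only
      have e : P (G.obj (F.obj (G.obj (F.obj a)))) a
            (F.map (G.map (adj.counit.app (F.obj a))) ≫ adj.counit.app (F.obj a)) =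
          I.map (G.map (adj.counit.app (F.obj a))) ≫
            P (G.obj (F.obj a)) a (adj.counit.app (F.obj a)) := hL _ _
      rw [← hcomp, ← e]
      congr 1
      exact (adj.counit_naturality (adj.counit.app (F.obj a))).symm
  · rintro ⟨γ, hη, hμ⟩
    have hγnat : ∀ {a b : C} (f : a ⟶ (F ⋙ G).obj b),
        I.map ((F ⋙ G).map f) ≫ γ.app ((F ⋙ G).obj b) = γ.app a ≫ I.map f := by
      intro a b f
      simpa using γ.naturality f
    refine ⟨fun a b h => I.map (adj.unit.app a ≫ G.map h) ≫ γ.app b, ?_, ?_, ?_⟩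
    · intro a' a b b' u v h
      dsimp only
      have hu : adj.unit.app a' ≫ G.map (F.map u ≫ h ≫ F.map v)
          = u ≫ (adj.unit.app a ≫ G.map h) ≫ G.map (F.map v) := by
        simp only [Functor.map_comp, ← Category.assoc]
        exact congrArg (fun k : a' ⟶ G.obj (F.obj a) => (k ≫ G.map h) ≫ G.map (F.map v))
          (adj.unit.naturality u).symm
      have hγ := γ.naturality v
      simp only [Functor.comp_map] at hγ
      rw [hu]
      simp only [Functor.map_comp, Category.assoc, hγ]
    · intro a b f
      dsimp only
      rw [adj.unit_naturality f, I.map_comp, Category.assoc, hη, Category.comp_id]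
    · intro a b c f g
      dsimp only
      have key : γ.app b ≫ I.map (adj.unit.app b ≫ G.map g) ≫ γ.app c
          = I.map (G.map g) ≫ γ.app c := by
        have h1 := hγnat (adj.unit.app b ≫ G.map g)
        dsimp only [Functor.comp_obj, Functor.comp_map, Functor.id_obj] at h1
        rw [← Category.assoc, ← h1, Category.assoc, hμ c, ← Category.assoc,
          ← I.map_comp, ← G.map_comp]
        have h2 : F.map (adj.unit.app b ≫ G.map g) ≫ adj.counit.app (F.obj c) = g := by
          simp
        rw [h2]
      calc I.map (adj.unit.app a ≫ G.map (f ≫ g)) ≫ γ.app c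
          = I.map (adj.unit.app a ≫ G.map f) ≫ I.map (G.map g) ≫ γ.app c := by
            simp only [Functor.map_comp, Category.assoc]
        _ = I.map (adj.unit.app a ≫ G.map f) ≫ γ.app b ≫
              I.map (adj.unit.app b ≫ G.map g) ≫ γ.app c := by rw [key]
        _ = (I.map (adj.unit.app a ≫ G.map f) ≫ γ.app b) ≫
              I.map (adj.unit.app b ≫ G.map g) ≫ γ.app c := by simp only [Category.assoc]
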